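/- In the extragradient setting with γ ∈ (0, 1/L) and z⋆ ∈ zer(F + ∂g), the Lyapunov values Vₖ satisfy Vₖ ≤ ‖z⁰ - z⋆‖² / (α(γ, L)(k + 1)) for all k ∈ ℕ, where α(γ, L) = (γ²/2)(√(5 - 4γ²L²) - 1) > 0. -/

import Mathlib

open scoped RealInnerProductSpace

/-- `g` is proper: finite somewhere and never `⊥`. -/
def IsProperEF {H : Type*} (g : H → EReal) : Prop :=
  (∃ x, g x ≠ ⊤) ∧ ∀ x, g x ≠ ⊥

/-- `g` is convex (extended-real-valued). -/
def IsConvexEF {H : Type*} [NormedAddCommGroup H] [InnerProductSpace ℝ H]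
    (g : H → EReal) : Prop :=
  ∀ x y : H, ∀ a b : ℝ, 0 ≤ a → 0 ≤ b → a + b = 1 →
    g (a • x + b • y) ≤ (a : EReal) * g x + (b : EReal) * g y

/-- `ξ` is a subgradient of `g` at `z`, i.e. `ξ ∈ ∂g(z)`. -/
def InSubdiff {H : Type*} [NormedAddCommGroup H] [InnerProductSpace ℝ H]
    (g : H → EReal) (z ξ : H) : Prop :=
  ∀ y : H, g z + ((⟪ξ, y - z⟫ : ℝ) : EReal) ≤ g y

/-- `p = prox_{γ g}(x)`, i.e. `p` minimizes `g(·) + (1/(2γ))‖x - ·‖²`. -/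
def IsProx {H : Type*} [NormedAddCommGroup H] [InnerProductSpace ℝ H]
    (g : H → EReal) (γ : ℝ) (x p : H) : Prop :=
  ∀ y : H, g p + ((1 / (2 * γ) * ‖x - p‖ ^ 2 : ℝ) : EReal) ≤
    g y + ((1 / (2 * γ) * ‖x - y‖ ^ 2 : ℝ) : EReal)

/-- The Lyapunov function `V`. -/
noncomputable def lyapV {H : Type*} [NormedAddCommGroup H] [InnerProductSpace ℝ H]
    (F : H → H) (γ : ℝ) (z zb zp : H) : ℝ :=
  (2 / γ) * ⟪z - zp, F z - F zb⟫ + (1 / γ ^ 2) * ‖zp - zb‖ ^ 2 + (1 / γ ^ 2) * ‖z - zp‖ ^ 2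

section Aux

variable {H : Type*} [NormedAddCommGroup H] [InnerProductSpace ℝ H]

lemma ereal_add_real_ne_top_left {x : EReal} {c : ℝ} {y : EReal} (h : x + (c : EReal) ≤ y)
    (hy : y ≠ ⊤) : x ≠ ⊤ := by
  intro hx
  rw [hx, EReal.top_add_coe] at h
  exact hy (top_le_iff.mp h)

lemma isProx_ne_top {g : H → EReal} {γ : ℝ} {x p y₀ : H} (h : IsProx g γ x p)
    (hy₀ : g y₀ ≠ ⊤) : g p ≠ ⊤ := by
  have h2 := h y₀
  have : g y₀ + ((1 / (2 * γ) * ‖x - y₀‖ ^ 2 : ℝ) : EReal) ≠ ⊤ :=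
    (EReal.add_lt_top hy₀ (EReal.coe_ne_top _)).ne
  exact ereal_add_real_ne_top_left h2 this

lemma inSubdiff_le_real {g : H → EReal} {p q ξ : H} {a b : ℝ} (h : InSubdiff g p ξ)
    (hp : g p = (a : ℝ)) (hq : g q = (b : ℝ)) : a + ⟪ξ, q - p⟫ ≤ b := by
  have h2 := h q
  rw [hp, hq, ← EReal.coe_add, EReal.coe_le_coe_iff] at h2
  exact h2

lemma inSubdiff_of_isProx {g : H → EReal} (hproper : IsProperEF g) (hconv : IsConvexEF g)
    {γ : ℝ} (hγ : 0 < γ) {x p : H} (h : IsProx g γ x p) :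
    InSubdiff g p (γ⁻¹ • (x - p)) := by
  obtain ⟨⟨y₀, hy₀⟩, hbot⟩ := hproper
  have hpt : g p ≠ ⊤ := isProx_ne_top h hy₀
  set a := (g p).toReal with ha
  have hpa : g p = (a : ℝ) := (EReal.coe_toReal hpt (hbot p)).symm
  intro y
  by_cases hy : g y = ⊤
  · rw [hy]; exact le_top
  set b := (g y).toReal with hb
  have hyb : g y = (b : ℝ) := (EReal.coe_toReal hy (hbot y)).symm
  rw [hpa, hyb, ← EReal.coe_add, EReal.coe_le_coe_iff]
  -- real goal
  have hγ' : γ ≠ 0 := hγ.ne'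
  set D : ℝ := ⟪x - p, y - p⟫ with hD
  set Y : ℝ := ‖y - p‖ ^ 2 with hYdef
  have hY : 0 ≤ Y := by rw [hYdef]; positivity
  have hInner : ⟪γ⁻¹ • (x - p), y - p⟫ = γ⁻¹ * D := real_inner_smul_left _ _ _
  rw [hInner]
  by_contra hcon
  push_neg at hcon
  set ε0 : ℝ := a + γ⁻¹ * D - b with hε0def
  have hε0 : 0 < ε0 := by rw [hε0def]; linarith
  have hkey : ∀ θ : ℝ, 0 < θ → θ ≤ 1 → a - b ≤ -(γ⁻¹ * D) + θ * (Y / (2 * γ)) := by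
    intro θ hθ0 hθ1
    have hconvx := hconv p y (1 - θ) θ (by linarith) hθ0.le (by ring)
    have hyθ : (1 - θ) • p + θ • y = p + θ • (y - p) := by
      rw [sub_smul, smul_sub, one_smul]; abel
    rw [hyθ, hpa, hyb] at hconvx
    have hcoe : ((1 - θ : ℝ) : EReal) * (a : ℝ) + ((θ : ℝ) : EReal) * (b : ℝ)
        = (((1 - θ) * a + θ * b : ℝ) : EReal) := by
      rw [← EReal.coe_mul, ← EReal.coe_mul, ← EReal.coe_add]
    rw [hcoe] at hconvx
    have hne_top : g (p + θ • (y - p)) ≠ ⊤ := by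
      intro ht; rw [ht] at hconvx; exact (EReal.coe_ne_top _) (top_le_iff.mp hconvx)
    set m := (g (p + θ • (y - p))).toReal with hm
    have hmeq : g (p + θ • (y - p)) = (m : ℝ) := (EReal.coe_toReal hne_top (hbot _)).symm
    rw [hmeq, EReal.coe_le_coe_iff] at hconvx
    have hprox := h (p + θ • (y - p))
    rw [hpa, hmeq, ← EReal.coe_add, ← EReal.coe_add, EReal.coe_le_coe_iff] at hprox
    have hdist : ‖x - (p + θ • (y - p))‖ ^ 2 = ‖x - p‖ ^ 2 - 2 * θ * D + θ ^ 2 * Y := by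
      have h1 : x - (p + θ • (y - p)) = (x - p) - θ • (y - p) := by abel
      rw [h1, hD, hYdef]
      simp only [← real_inner_self_eq_norm_sq, inner_sub_left, inner_sub_right,
        inner_smul_left, inner_smul_right, starRingEnd_apply, star_trivial, real_inner_comm]
      ring
    rw [hdist] at hprox
    -- hprox : a + 1/(2γ)*‖x-p‖^2 ≤ m + 1/(2γ)*(‖x-p‖^2 - 2θD + θ²Y)
    have hc : (0:ℝ) < 1 / (2 * γ) := by positivity
    have hθab : θ * (a - b) ≤ θ * (-(γ⁻¹ * D) + θ * (Y / (2 * γ))) := by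
      have e1 : 1 / (2 * γ) * (‖x - p‖ ^ 2 - 2 * θ * D + θ ^ 2 * Y)
          - 1 / (2 * γ) * ‖x - p‖ ^ 2 = θ * (-(γ⁻¹ * D) + θ * (Y / (2 * γ))) := by
        field_simp
        ring
      nlinarith [hconvx, hprox]
    exact le_of_mul_le_mul_left (by linarith [hθab]) hθ0
  have hYc : 0 ≤ Y / (2 * γ) := by positivity
  set θ₀ : ℝ := min 1 (ε0 / (Y / (2 * γ) + 1)) with hθ₀def
  have hθ₀pos : 0 < θ₀ := lt_min one_pos (by positivity)
  have hθ₀le : θ₀ ≤ 1 := min_le_left _ _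
  have h1 := hkey θ₀ hθ₀pos hθ₀le
  have h2 : θ₀ ≤ ε0 / (Y / (2 * γ) + 1) := min_le_right _ _
  have h3 : θ₀ * (Y / (2 * γ)) < ε0 := by
    have h4 : θ₀ * (Y / (2 * γ)) ≤ (ε0 / (Y / (2 * γ) + 1)) * (Y / (2 * γ)) :=
      mul_le_mul_of_nonneg_right h2 hYc
    have h5 : (ε0 / (Y / (2 * γ) + 1)) * (Y / (2 * γ)) < ε0 := by
      rw [div_mul_eq_mul_div, div_lt_iff₀ (by positivity)]
      nlinarith [hYc, hε0]
    linarith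
  rw [hε0def] at h3
  linarith

end Aux

section Key

variable {H : Type*} [NormedAddCommGroup H] [InnerProductSpace ℝ H]

private lemma keyA (γ L β : ℝ) (hγ : 0 < γ) (hβ0 : 0 ≤ β) (hβ : β ^ 2 + β = 1 - γ ^ 2 * L ^ 2)
    (zz zs f0 f1 fs u v zb zp : H)
    (hzb : zb = zz - γ • f0 - γ • u) (hzp : zp = zz - γ • f1 - γ • v)
    (hLip : ‖f0 - f1‖ ≤ L * ‖zz - zb‖)
    (hMono : 0 ≤ ⟪f1 - fs, zb - zs⟫)
    (hCyc : ⟪u, zp - zb⟫ + ⟪v, zs - zp⟫ + ⟪-fs, zb - zs⟫ ≤ 0)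
    (hPair : 0 ≤ ⟪u - v, zb - zp⟫) :
    γ ^ 2 * β * ((2 / γ) * ⟪zz - zp, f0 - f1⟫ + (1 / γ ^ 2) * ‖zp - zb‖ ^ 2
      + (1 / γ ^ 2) * ‖zz - zp‖ ^ 2) ≤ ‖zz - zs‖ ^ 2 - ‖zp - zs‖ ^ 2 := by
  have hγ' : γ ≠ 0 := hγ.ne'
  have hL2 : ‖f0 - f1‖ ^ 2 ≤ L ^ 2 * ‖zz - zb‖ ^ 2 := by
    have h := pow_le_pow_left₀ (norm_nonneg _) hLip 2
    rwa [mul_pow] at h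
  have hV : (2 / γ) * ⟪zz - zp, f0 - f1⟫ + (1 / γ ^ 2) * ‖zp - zb‖ ^ 2
      + (1 / γ ^ 2) * ‖zz - zp‖ ^ 2
      = 2 * ⟪f1 + v, f0 - f1⟫ + ‖(f0 + u) - (f1 + v)‖ ^ 2 + ‖f1 + v‖ ^ 2 := by
    have h1 : zz - zp = γ • (f1 + v) := by rw [hzp, smul_add]; abel
    have h2 : zp - zb = γ • ((f0 + u) - (f1 + v)) := by
      rw [hzp, hzb, smul_sub, smul_add, smul_add]; abel
    rw [h1, h2, real_inner_smul_left, norm_smul, norm_smul, Real.norm_eq_abs,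
      mul_pow, mul_pow, sq_abs]
    field_simp
  rw [hV]
  have hm1 : γ ^ 2 * ‖f0 - f1‖ ^ 2 ≤ γ ^ 2 * (L ^ 2 * ‖zz - zb‖ ^ 2) :=
    mul_le_mul_of_nonneg_left hL2 (by positivity)
  have hm2 : 0 ≤ γ * ⟪f1 - fs, zb - zs⟫ := mul_nonneg hγ.le hMono
  have hm3 : γ * (⟪u, zp - zb⟫ + ⟪v, zs - zp⟫ + ⟪-fs, zb - zs⟫) ≤ 0 := by
    calc γ * (⟪u, zp - zb⟫ + ⟪v, zs - zp⟫ + ⟪-fs, zb - zs⟫) ≤ γ * 0 :=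
          mul_le_mul_of_nonneg_left hCyc hγ.le
      _ = 0 := mul_zero γ
  have hm4 : 0 ≤ 2 * β * (γ * ⟪u - v, zb - zp⟫) :=
    mul_nonneg (by positivity) (mul_nonneg hγ.le hPair)
  have hsos : 0 ≤ (1 - γ ^ 2 * L ^ 2 - β) * ‖zz - zb‖ ^ 2
      + 2 * β * ⟪zz - zb, γ • u - γ • v⟫ + ‖γ • u - γ • v‖ ^ 2 := by
    have hb2 : 1 - γ ^ 2 * L ^ 2 - β = β ^ 2 := by linarith
    rw [hb2]
    have hexp : ‖β • (zz - zb) + (γ • u - γ • v)‖ ^ 2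
        = β ^ 2 * ‖zz - zb‖ ^ 2 + 2 * β * ⟪zz - zb, γ • u - γ • v⟫
          + ‖γ • u - γ • v‖ ^ 2 := by
      simp only [← real_inner_self_eq_norm_sq, inner_add_left, inner_add_right,
        inner_sub_left, inner_sub_right, inner_smul_left, inner_smul_right,
        starRingEnd_apply, star_trivial, real_inner_comm]
      ring
    rw [← hexp]
    positivity
  subst hzb hzp
  simp only [← real_inner_self_eq_norm_sq, inner_add_left, inner_add_right,
    inner_sub_left, inner_sub_right, inner_smul_left, inner_smul_right,
    inner_neg_left, inner_neg_right, starRingEnd_apply, star_trivial,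
    real_inner_comm] at hm1 hm2 hm3 hm4 hsos ⊢
  linarith [hm1, hm2, hm3, hm4, hsos]

private lemma keyB (γ L : ℝ) (hγ : 0 < γ) (ht : γ ^ 2 * L ^ 2 ≤ 1)
    (zz zb zp zb2 zpp f0 f1 f2 f3 u v u2 v2 : H)
    (hzb : zb = zz - γ • f0 - γ • u) (hzp : zp = zz - γ • f1 - γ • v)
    (hzb2 : zb2 = zp - γ • f2 - γ • u2) (hzpp : zpp = zp - γ • f3 - γ • v2)
    (hMono : 0 ≤ ⟪f0 - f2, zz - zp⟫)
    (hLip : ‖f1 - f2‖ ≤ L * ‖zb - zp‖)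
    (hCyc : ⟪v, zb2 - zp⟫ + ⟪u2, zpp - zb2⟫ + ⟪v2, zp - zpp⟫ ≤ 0) :
    (2 / γ) * ⟪zp - zpp, f2 - f3⟫ + (1 / γ ^ 2) * ‖zpp - zb2‖ ^ 2
      + (1 / γ ^ 2) * ‖zp - zpp‖ ^ 2
    ≤ (2 / γ) * ⟪zz - zp, f0 - f1⟫ + (1 / γ ^ 2) * ‖zp - zb‖ ^ 2
      + (1 / γ ^ 2) * ‖zz - zp‖ ^ 2 := by
  have hγ' : γ ≠ 0 := hγ.ne'
  have hL2 : ‖f1 - f2‖ ^ 2 ≤ L ^ 2 * ‖zb - zp‖ ^ 2 := by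
    have h := pow_le_pow_left₀ (norm_nonneg _) hLip 2
    rwa [mul_pow] at h
  have hV1 : (2 / γ) * ⟪zz - zp, f0 - f1⟫ + (1 / γ ^ 2) * ‖zp - zb‖ ^ 2
      + (1 / γ ^ 2) * ‖zz - zp‖ ^ 2
      = 2 * ⟪f1 + v, f0 - f1⟫ + ‖(f0 + u) - (f1 + v)‖ ^ 2 + ‖f1 + v‖ ^ 2 := by
    have h1 : zz - zp = γ • (f1 + v) := by rw [hzp, smul_add]; abel
    have h2 : zp - zb = γ • ((f0 + u) - (f1 + v)) := by
      rw [hzp, hzb, smul_sub, smul_add, smul_add]; abel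
    rw [h1, h2, real_inner_smul_left, norm_smul, norm_smul, Real.norm_eq_abs,
      mul_pow, mul_pow, sq_abs]
    field_simp
  have hV2 : (2 / γ) * ⟪zp - zpp, f2 - f3⟫ + (1 / γ ^ 2) * ‖zpp - zb2‖ ^ 2
      + (1 / γ ^ 2) * ‖zp - zpp‖ ^ 2
      = 2 * ⟪f3 + v2, f2 - f3⟫ + ‖(f2 + u2) - (f3 + v2)‖ ^ 2 + ‖f3 + v2‖ ^ 2 := by
    have h1 : zp - zpp = γ • (f3 + v2) := by rw [hzpp, smul_add]; abel
    have h2 : zpp - zb2 = γ • ((f2 + u2) - (f3 + v2)) := by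
      rw [hzpp, hzb2, smul_sub, smul_add, smul_add]; abel
    rw [h1, h2, real_inner_smul_left, norm_smul, norm_smul, Real.norm_eq_abs,
      mul_pow, mul_pow, sq_abs]
    field_simp
  rw [hV1, hV2]
  have hred : γ ^ 2 * (2 * ⟪f3 + v2, f2 - f3⟫ + ‖(f2 + u2) - (f3 + v2)‖ ^ 2 + ‖f3 + v2‖ ^ 2)
      ≤ γ ^ 2 * (2 * ⟪f1 + v, f0 - f1⟫ + ‖(f0 + u) - (f1 + v)‖ ^ 2 + ‖f1 + v‖ ^ 2) := by
    have hm1 : 0 ≤ 2 * (γ * ⟪f0 - f2, zz - zp⟫) :=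
      mul_nonneg (by norm_num) (mul_nonneg hγ.le hMono)
    have hm2 : γ ^ 2 * ‖f1 - f2‖ ^ 2 ≤ γ ^ 2 * (L ^ 2 * ‖zb - zp‖ ^ 2) :=
      mul_le_mul_of_nonneg_left hL2 (by positivity)
    have hm3 : 2 * (γ * (⟪v, zb2 - zp⟫ + ⟪u2, zpp - zb2⟫ + ⟪v2, zp - zpp⟫)) ≤ 0 := by
      have : γ * (⟪v, zb2 - zp⟫ + ⟪u2, zpp - zb2⟫ + ⟪v2, zp - zpp⟫) ≤ γ * 0 :=
        mul_le_mul_of_nonneg_left hCyc hγ.le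
      rw [mul_zero] at this
      linarith
    have hsos1 : 0 ≤ (1 - γ ^ 2 * L ^ 2) * ‖γ • (f0 - f1 + u - v)‖ ^ 2 :=
      mul_nonneg (by linarith) (by positivity)
    have hsos2 : (0:ℝ) ≤ ‖γ • v - γ • u2‖ ^ 2 := by positivity
    subst hzb hzp hzb2 hzpp
    simp only [← real_inner_self_eq_norm_sq, inner_add_left, inner_add_right,
      inner_sub_left, inner_sub_right, inner_smul_left, inner_smul_right,
      inner_neg_left, inner_neg_right, starRingEnd_apply, star_trivial,
      real_inner_comm] at hm1 hm2 hm3 hsos1 hsos2 ⊢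
    linarith [hm1, hm2, hm3, hsos1, hsos2]
  have hγ2 : (0:ℝ) < γ ^ 2 := by positivity
  exact le_of_mul_le_mul_left hred hγ2

end Key

theorem stmt6 {H : Type*} [NormedAddCommGroup H] [InnerProductSpace ℝ H] [CompleteSpace H]
    (F : H → H) (L γ : ℝ) (hL : 0 < L)
    (hmono : ∀ x y : H, 0 ≤ ⟪F x - F y, x - y⟫)
    (hlip : ∀ x y : H, ‖F x - F y‖ ≤ L * ‖x - y‖)
    (g : H → EReal) (hproper : IsProperEF g) (hconv : IsConvexEF g)
    (hlsc : LowerSemicontinuous g)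
    (hγ0 : 0 < γ) (hγ1 : γ < 1 / L)
    (zstar : H) (hzstar : InSubdiff g zstar (-F zstar))
    (z zb : ℕ → H)
    (hzb : ∀ k, IsProx g γ (z k - γ • F (z k)) (zb k))
    (hz : ∀ k, IsProx g γ (z k - γ • F (zb k)) (z (k + 1))) :
    0 < γ ^ 2 / 2 * (Real.sqrt (5 - 4 * γ ^ 2 * L ^ 2) - 1) ∧
      ∀ k : ℕ,
        lyapV F γ (z k) (zb k) (z (k + 1)) ≤
          ‖z 0 - zstar‖ ^ 2 /
            (γ ^ 2 / 2 * (Real.sqrt (5 - 4 * γ ^ 2 * L ^ 2) - 1) * (k + 1)) := by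
  have hγ' : γ ≠ 0 := hγ0.ne'
  have htL : γ * L < 1 := by
    rw [lt_div_iff₀ hL] at hγ1
    exact hγ1
  have htL2 : γ ^ 2 * L ^ 2 < 1 := by nlinarith [mul_pos hγ0 hL]
  have h5 : (0:ℝ) < 5 - 4 * γ ^ 2 * L ^ 2 := by nlinarith
  set r : ℝ := Real.sqrt (5 - 4 * γ ^ 2 * L ^ 2) with hrdef
  have hr2 : r ^ 2 = 5 - 4 * γ ^ 2 * L ^ 2 := Real.sq_sqrt h5.le
  have hr1 : 1 < r := by
    rw [hrdef]
    rw [show (1:ℝ) = Real.sqrt 1 from (Real.sqrt_one).symm]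
    exact Real.sqrt_lt_sqrt (by norm_num) (by nlinarith)
  set β : ℝ := (r - 1) / 2 with hβdef
  have hβ0 : 0 < β := by rw [hβdef]; linarith
  have hβrel : β ^ 2 + β = 1 - γ ^ 2 * L ^ 2 := by
    rw [hβdef]
    nlinarith [hr2]
  have hαeq : γ ^ 2 / 2 * (r - 1) = γ ^ 2 * β := by rw [hβdef]; ring
  have hαpos : 0 < γ ^ 2 / 2 * (r - 1) := by
    have : (0:ℝ) < γ ^ 2 := by positivity
    nlinarith
  refine ⟨hαpos, ?_⟩
  -- properness data
  obtain ⟨⟨y₀, hy₀⟩, hbot⟩ := hproper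
  -- finiteness
  have hfinb : ∀ k, g (zb k) ≠ ⊤ := fun k => isProx_ne_top (hzb k) hy₀
  have hfinz : ∀ k, g (z (k + 1)) ≠ ⊤ := fun k => isProx_ne_top (hz k) hy₀
  have hfins : g zstar ≠ ⊤ := by
    have h2 := hzstar y₀
    exact ereal_add_real_ne_top_left h2 hy₀
  -- real values
  have hgb : ∀ k, g (zb k) = (((g (zb k)).toReal : ℝ) : EReal) :=
    fun k => (EReal.coe_toReal (hfinb k) (hbot _)).symm
  have hgz : ∀ k, g (z (k + 1)) = (((g (z (k + 1))).toReal : ℝ) : EReal) :=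
    fun k => (EReal.coe_toReal (hfinz k) (hbot _)).symm
  have hgs : g zstar = (((g zstar).toReal : ℝ) : EReal) :=
    (EReal.coe_toReal hfins (hbot _)).symm
  -- subgradients
  set u : ℕ → H := fun k => γ⁻¹ • (z k - γ • F (z k) - zb k) with hudef
  set v : ℕ → H := fun k => γ⁻¹ • (z k - γ • F (zb k) - z (k + 1)) with hvdef
  have hsubu : ∀ k, InSubdiff g (zb k) (u k) := fun k =>
    inSubdiff_of_isProx ⟨⟨y₀, hy₀⟩, hbot⟩ hconv hγ0 (hzb k)
  have hsubv : ∀ k, InSubdiff g (z (k + 1)) (v k) := fun k =>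
    inSubdiff_of_isProx ⟨⟨y₀, hy₀⟩, hbot⟩ hconv hγ0 (hz k)
  have hzbk : ∀ k, zb k = z k - γ • F (z k) - γ • u k := by
    intro k
    rw [hudef]
    simp only [smul_inv_smul₀ hγ']
    abel
  have hzpk : ∀ k, z (k + 1) = z k - γ • F (zb k) - γ • v k := by
    intro k
    rw [hvdef]
    simp only [smul_inv_smul₀ hγ']
    abel
  -- Lemma A
  have lemA : ∀ k, γ ^ 2 * β * lyapV F γ (z k) (zb k) (z (k + 1))
      ≤ ‖z k - zstar‖ ^ 2 - ‖z (k + 1) - zstar‖ ^ 2 := by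
    intro k
    have hCyc : ⟪u k, z (k + 1) - zb k⟫ + ⟪v k, zstar - z (k + 1)⟫
        + ⟪-F zstar, zb k - zstar⟫ ≤ 0 := by
      have s1 := inSubdiff_le_real (hsubu k) (hgb k) (hgz k)
      have s2 := inSubdiff_le_real (hsubv k) (hgz k) hgs
      have s3 := inSubdiff_le_real hzstar hgs (hgb k)
      linarith
    have hPair : 0 ≤ ⟪u k - v k, zb k - z (k + 1)⟫ := by
      have s1 := inSubdiff_le_real (hsubu k) (hgb k) (hgz k)
      have s2 := inSubdiff_le_real (hsubv k) (hgz k) (hgb k)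
      have he : ⟪u k - v k, zb k - z (k + 1)⟫
          = -(⟪u k, z (k + 1) - zb k⟫ + ⟪v k, zb k - z (k + 1)⟫) := by
        simp only [inner_sub_left, inner_sub_right]
        ring
      rw [he]
      linarith
    have := keyA γ L β hγ0 hβ0.le hβrel (z k) zstar (F (z k)) (F (zb k)) (F zstar)
      (u k) (v k) (zb k) (z (k + 1)) (hzbk k) (hzpk k)
      (by
        have h := hlip (z k) (zb k)
        exact h)
      (hmono (zb k) zstar) hCyc hPair
    rw [lyapV]
    exact this
  -- Lemma B
  have lemB : ∀ k, lyapV F γ (z (k + 1)) (zb (k + 1)) (z (k + 2))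
      ≤ lyapV F γ (z k) (zb k) (z (k + 1)) := by
    intro k
    have hCyc : ⟪v k, zb (k + 1) - z (k + 1)⟫ + ⟪u (k + 1), z (k + 2) - zb (k + 1)⟫
        + ⟪v (k + 1), z (k + 1) - z (k + 2)⟫ ≤ 0 := by
      have s1 := inSubdiff_le_real (hsubv k) (hgz k) (hgb (k + 1))
      have s2 := inSubdiff_le_real (hsubu (k + 1)) (hgb (k + 1)) (hgz (k + 1))
      have s3 := inSubdiff_le_real (hsubv (k + 1)) (hgz (k + 1)) (hgz k)
      linarith
    have := keyB γ L hγ0 htL2.le (z k) (zb k) (z (k + 1)) (zb (k + 1)) (z (k + 2))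
      (F (z k)) (F (zb k)) (F (z (k + 1))) (F (zb (k + 1)))
      (u k) (v k) (u (k + 1)) (v (k + 1))
      (hzbk k) (hzpk k) (hzbk (k + 1)) (hzpk (k + 1))
      (hmono (z k) (z (k + 1))) (hlip (zb k) (z (k + 1))) hCyc
    rw [lyapV, lyapV]
    exact this
  -- monotone decrease across steps
  have hmonoV : ∀ j k : ℕ, j ≤ k →
      lyapV F γ (z k) (zb k) (z (k + 1)) ≤ lyapV F γ (z j) (zb j) (z (j + 1)) := by
    intro j k hjk
    induction k with
    | zero =>
      have hj0 : j = 0 := Nat.le_zero.mp hjk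
      subst hj0
      exact le_refl _
    | succ n ih =>
      rcases Nat.lt_or_ge j (n + 1) with h | h
      · exact le_trans (lemB n) (ih (Nat.lt_succ_iff.mp h))
      · have : j = n + 1 := le_antisymm hjk h
        subst this
        exact le_refl _
  -- telescoping bound
  have hsum : ∀ k : ℕ, ((k : ℝ) + 1) * (γ ^ 2 * β * lyapV F γ (z k) (zb k) (z (k + 1)))
      ≤ ‖z 0 - zstar‖ ^ 2 - ‖z (k + 1) - zstar‖ ^ 2 := by
    intro k
    induction k with
    | zero => simpa using lemA 0
    | succ n ih =>
      have h1 : ((n : ℝ) + 1) * (γ ^ 2 * β * lyapV F γ (z (n + 1)) (zb (n + 1)) (z (n + 2)))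
          ≤ ((n : ℝ) + 1) * (γ ^ 2 * β * lyapV F γ (z n) (zb n) (z (n + 1))) := by
        apply mul_le_mul_of_nonneg_left _ (by positivity)
        apply mul_le_mul_of_nonneg_left (lemB n) (by positivity)
      have h2 := lemA (n + 1)
      push_cast
      push_cast at ih
      nlinarith [h1, h2, ih]
  intro k
  have hk1 : (0:ℝ) < (k : ℝ) + 1 := by positivity
  have hden : 0 < γ ^ 2 / 2 * (r - 1) * ((k : ℝ) + 1) := mul_pos hαpos hk1
  rw [le_div_iff₀ hden]
  have := hsum k
  have hnorm : (0:ℝ) ≤ ‖z (k + 1) - zstar‖ ^ 2 := by positivity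
  calc lyapV F γ (z k) (zb k) (z (k + 1)) * (γ ^ 2 / 2 * (r - 1) * ((k : ℝ) + 1))
      = ((k : ℝ) + 1) * (γ ^ 2 * β * lyapV F γ (z k) (zb k) (z (k + 1))) := by
        rw [hαeq]; ring
    _ ≤ ‖z 0 - zstar‖ ^ 2 - ‖z (k + 1) - zstar‖ ^ 2 := this
    _ ≤ ‖z 0 - zstar‖ ^ 2 := by linarith
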